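/- Fix 1 ≤ k ≤ d, m neurons with weights w_r ∈ ℝ^d and second-layer signs a_r ∈ {−1,1}, a real α ≥ 0, and a point x ∈ {−1,1}^d. Say neuron r is good if a_r = ∏_{j=1}^k sign(w_{r,j}) and bad otherwise, and say a good neuron r has sign pattern b ∈ {−1,1}^k if sign(w_{r,j}) = b_j for all j ∈ {1,…,k}. Assume: (i) for every good neuron r and j ∈ {1,…,k}, w_{r,j} ∈ {−1,1}; (ii) |w_{r,j}| ≤ d^{−(k+1)} for every good neuron r and j ∈ {k+1,…,d}, and for every bad neuron r and all j ∈ {1,…,d}; (iii) for every b ∈ {−1,1}^k, the number of good neurons with sign pattern b lies in [(1−α)m/2^{k+1}, (1+α)m/2^{k+1}], and the number of bad neurons is at most (1+α)m/2; (iv) |Σ_{j=k+1}^d w_{r,j} x_j| ≤ d^{−k} for every r ∈ {1,…,m}. Then |f(W,x) − (m/2^{k+1})·f(W*,x)| ≤ ( α·k^k·2^{−k}·(1+e^{−2})^k + 0.5·(1+α)·k·d^{−k}·(k+d^{−k})^{k−1} + 0.5·(1+α)·(2d^{−k})^k )·m. -/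

import Mathlib

open scoped Classical

noncomputable section

/-- ±1 encoding of a Boolean bit. -/
def pm (b : Bool) : ℝ := if b then 1 else -1

/-- Euclidean inner product of a real weight vector with a ±1 input. -/
def ip (d : ℕ) (w : Fin d → ℝ) (x : Fin d → Bool) : ℝ := ∑ i, w i * pm (x i)

/-- Two-layer network `f(W,x) = Σ_r a_r ⟨w_r,x⟩^k` with ±1 second layer. -/
def net (k d m : ℕ) (a : Fin m → Bool) (W : Fin m → Fin d → ℝ) (x : Fin d → Bool) : ℝ :=
  ∑ r, pm (a r) * ip d (W r) x ^ k

/-- The good network `f(W*,x) = Σ_{b ∈ {−1,1}^k} (∏_j b_j)·(Σ_j b_j x_j)^k`. -/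
def goodNet (k d : ℕ) (hkd : k ≤ d) (x : Fin d → Bool) : ℝ :=
  ∑ b : Fin k → Bool,
    (∏ j, pm (b j)) * (∑ j : Fin k, pm (b j) * pm (x (Fin.castLE hkd j))) ^ k

/-- Neuron `r` is good: `a_r = ∏_{j=1}^k sign(w_{r,j})`. -/
def goodNeuron (k d m : ℕ) (W : Fin m → Fin d → ℝ) (a : Fin m → Bool) (r : Fin m) : Prop :=
  pm (a r) = ∏ j ∈ Finset.univ.filter (fun j : Fin d => (j : ℕ) < k), Real.sign (W r j)

/-- Neuron `r` has sign pattern `b ∈ {−1,1}^k`: `sign(w_{r,j}) = b_j` for `j ∈ {1,…,k}`. -/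
def hasPattern (k d m : ℕ) (hkd : k ≤ d) (W : Fin m → Fin d → ℝ) (b : Fin k → Bool)
    (r : Fin m) : Prop :=
  ∀ j : Fin k, Real.sign (W r (Fin.castLE hkd j)) = pm (b j)

section Aux

lemma aux_abs_pow_sub_pow (a c M : ℝ) (k : ℕ) (ha : |a| ≤ M) (hc : |c| ≤ M) :
    |a ^ k - c ^ k| ≤ k * M ^ (k - 1) * |a - c| := by
  have hM : 0 ≤ M := le_trans (abs_nonneg a) ha
  rw [← geom_sum₂_mul a c k, abs_mul]
  apply mul_le_mul_of_nonneg_right _ (abs_nonneg _)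
  calc |∑ i ∈ Finset.range k, a ^ i * c ^ (k - 1 - i)|
      ≤ ∑ i ∈ Finset.range k, |a ^ i * c ^ (k - 1 - i)| := Finset.abs_sum_le_sum_abs _ _
    _ ≤ ∑ _i ∈ Finset.range k, M ^ (k - 1) := by
        apply Finset.sum_le_sum; intro i hi
        rw [abs_mul, abs_pow, abs_pow]
        calc |a| ^ i * |c| ^ (k - 1 - i) ≤ M ^ i * M ^ (k - 1 - i) := by gcongr
          _ = M ^ (k - 1) := by
              rw [← pow_add]; congr 1; simp at hi; omega
    _ = k * M ^ (k - 1) := by simp [mul_comm]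

lemma aux_half (i j k : ℕ) (hk : 0 < k) (hij : i + j = k) (h : i ≤ j) :
    ((j : ℝ) - i) ^ k ≤ (k : ℝ) ^ k * Real.exp (-(2 * i)) := by
  have hkR : (0 : ℝ) < k := by exact_mod_cast hk
  have ht := Real.add_one_le_exp (-(2 * i) / k)
  have h1 : (j : ℝ) - i ≤ k * Real.exp (-(2 * i) / k) := by
    have hji : (j : ℝ) - i = k - 2 * i := by
      have : (i : ℝ) + j = k := by exact_mod_cast hij
      linarith
    rw [hji]
    have := mul_le_mul_of_nonneg_left ht (le_of_lt hkR)
    calc (k : ℝ) - 2 * i = k * (-(2 * i) / k + 1) := by field_simp; ring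
      _ ≤ k * Real.exp (-(2 * i) / k) := this
  have h0 : (0 : ℝ) ≤ (j : ℝ) - i := by
    have : (i : ℝ) ≤ j := by exact_mod_cast h
    linarith
  calc ((j : ℝ) - i) ^ k ≤ (k * Real.exp (-(2 * i) / k)) ^ k := by
        exact pow_le_pow_left₀ h0 h1 k
    _ = (k : ℝ) ^ k * Real.exp (-(2 * i)) := by
        rw [mul_pow, ← Real.exp_nat_mul]
        congr 2
        field_simp

lemma aux_key (i j k : ℕ) (hk : 0 < k) (hij : i + j = k) :
    |(j : ℝ) - i| ^ k ≤ (k : ℝ) ^ k * (Real.exp (-(2 * i)) + Real.exp (-(2 * j))) := by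
  have hkk : (0 : ℝ) ≤ (k : ℝ) ^ k := by positivity
  rcases le_total i j with h | h
  · have h0 : (0 : ℝ) ≤ (j : ℝ) - i := by
      have : (i : ℝ) ≤ j := by exact_mod_cast h
      linarith
    rw [abs_of_nonneg h0]
    have := aux_half i j k hk hij h
    nlinarith [Real.exp_pos (-(2 * (j : ℝ)))]
  · have h0 : (0 : ℝ) ≤ (i : ℝ) - j := by
      have : (j : ℝ) ≤ i := by exact_mod_cast h
      linarith
    rw [abs_sub_comm, abs_of_nonneg h0]
    have := aux_half j i k hk (by omega) h
    nlinarith [Real.exp_pos (-(2 * (i : ℝ)))]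

lemma aux_sum_prod_bool {k : ℕ} (f : Fin k → Bool → ℝ) :
    ∑ b : Fin k → Bool, ∏ j, f j (b j) = ∏ j, (f j true + f j false) := by
  rw [← Fintype.piFinset_univ, Finset.sum_prod_piFinset]
  simp

lemma aux_prod_ite_card {k : ℕ} (p : Fin k → Prop) [DecidablePred p] (c : ℝ) :
    ∏ j, (if p j then (1 : ℝ) else c)
      = c ^ (Finset.univ.filter (fun j => ¬ p j)).card := by
  rw [Finset.prod_ite]
  simp

lemma aux_prod_ite_card' {k : ℕ} (p : Fin k → Prop) [DecidablePred p] (c : ℝ) :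
    ∏ j, (if p j then c else (1 : ℝ))
      = c ^ (Finset.univ.filter (fun j => p j)).card := by
  rw [Finset.prod_ite]
  simp

lemma aux_sum_E (k : ℕ) (y : Fin k → Bool) (c : ℝ) :
    ∑ b : Fin k → Bool,
        ((∏ j, (if b j = y j then (1 : ℝ) else c)) +
          ∏ j, (if b j = y j then c else (1 : ℝ))) = 2 * (1 + c) ^ k := by
  rw [Finset.sum_add_distrib]
  rw [aux_sum_prod_bool (fun j t => if t = y j then (1 : ℝ) else c),
      aux_sum_prod_bool (fun j t => if t = y j then c else (1 : ℝ))]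
  have e1 : ∀ j : Fin k,
      ((if true = y j then (1 : ℝ) else c) + (if false = y j then (1 : ℝ) else c)) = 1 + c := by
    intro j; cases hy : y j <;> simp [add_comm]
  have e2 : ∀ j : Fin k,
      ((if true = y j then c else (1 : ℝ)) + (if false = y j then c else (1 : ℝ))) = 1 + c := by
    intro j; cases hy : y j <;> simp [add_comm]
  rw [Finset.prod_congr rfl (fun j _ => e1 j), Finset.prod_congr rfl (fun j _ => e2 j)]
  simp
  ring

lemma aux_filter_eq (k d : ℕ) (hkd : k ≤ d) :
    Finset.univ.filter (fun j : Fin d => (j : ℕ) < k) =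
      Finset.image (Fin.castLE hkd) Finset.univ := by
  ext j
  simp only [Finset.mem_filter, Finset.mem_univ, true_and, Finset.mem_image]
  constructor
  · intro hj; exact ⟨⟨j, hj⟩, rfl⟩
  · rintro ⟨i, rfl⟩; exact i.2

lemma aux_prod_cast (k d : ℕ) (hkd : k ≤ d) (f : Fin d → ℝ) :
    ∏ j ∈ Finset.univ.filter (fun j : Fin d => (j : ℕ) < k), f j
      = ∏ j : Fin k, f (Fin.castLE hkd j) := by
  rw [aux_filter_eq k d hkd, Finset.prod_image]
  intro a _ b _ h
  exact Fin.castLE_injective hkd h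

lemma aux_sum_cast (k d : ℕ) (hkd : k ≤ d) (f : Fin d → ℝ) :
    ∑ j ∈ Finset.univ.filter (fun j : Fin d => (j : ℕ) < k), f j
      = ∑ j : Fin k, f (Fin.castLE hkd j) := by
  rw [aux_filter_eq k d hkd, Finset.sum_image]
  intro a _ b _ h
  exact Fin.castLE_injective hkd h

lemma aux_pm_mul (s t : Bool) : pm s * pm t = if s = t then 1 else -1 := by
  cases s <;> cases t <;> simp [pm]

lemma aux_pm_inj (s t : Bool) (h : pm s = pm t) : s = t := by
  cases s <;> cases t <;> simp_all [pm] <;> norm_num at h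

lemma aux_abs_pm (s : Bool) : |pm s| = 1 := by cases s <;> simp [pm]

lemma aux_S_eq {k : ℕ} (b y : Fin k → Bool) :
    ∑ j, pm (b j) * pm (y j) =
      ((Finset.univ.filter (fun j => b j = y j)).card : ℝ) -
        ((Finset.univ.filter (fun j => ¬ b j = y j)).card : ℝ) := by
  rw [← Finset.sum_filter_add_sum_filter_not Finset.univ (fun j => b j = y j)]
  have h1 : ∑ j ∈ Finset.univ.filter (fun j => b j = y j), pm (b j) * pm (y j)
      = ∑ _j ∈ Finset.univ.filter (fun j => b j = y j), (1 : ℝ) :=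
    Finset.sum_congr rfl (fun j hj => by
      rw [aux_pm_mul, if_pos (Finset.mem_filter.mp hj).2])
  have h2 : ∑ j ∈ Finset.univ.filter (fun j => ¬ b j = y j), pm (b j) * pm (y j)
      = ∑ _j ∈ Finset.univ.filter (fun j => ¬ b j = y j), (-1 : ℝ) :=
    Finset.sum_congr rfl (fun j hj => by
      rw [aux_pm_mul, if_neg (Finset.mem_filter.mp hj).2])
  rw [h1, h2]
  simp [Finset.sum_const]
  ring

end Aux

theorem trained_net_approximates_good_net (k d m : ℕ) (hk : 1 ≤ k) (hkd : k ≤ d)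
    (W : Fin m → Fin d → ℝ) (a : Fin m → Bool) (α : ℝ) (hα : 0 ≤ α) (x : Fin d → Bool)
    (h1 : ∀ r : Fin m, goodNeuron k d m W a r →
      ∀ j : Fin d, (j : ℕ) < k → W r j = 1 ∨ W r j = -1)
    (h2g : ∀ r : Fin m, goodNeuron k d m W a r →
      ∀ j : Fin d, k ≤ (j : ℕ) → |W r j| ≤ ((d : ℝ) ^ (k + 1))⁻¹)
    (h2b : ∀ r : Fin m, ¬ goodNeuron k d m W a r →
      ∀ j : Fin d, |W r j| ≤ ((d : ℝ) ^ (k + 1))⁻¹)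
    (h3 : ∀ b : Fin k → Bool,
      (1 - α) * m / 2 ^ (k + 1) ≤
          ((Finset.univ.filter (fun r : Fin m =>
            goodNeuron k d m W a r ∧ hasPattern k d m hkd W b r)).card : ℝ) ∧
        ((Finset.univ.filter (fun r : Fin m =>
            goodNeuron k d m W a r ∧ hasPattern k d m hkd W b r)).card : ℝ) ≤
          (1 + α) * m / 2 ^ (k + 1))
    (h3b : ((Finset.univ.filter (fun r : Fin m => ¬ goodNeuron k d m W a r)).card : ℝ) ≤
      (1 + α) * m / 2)
    (h4 : ∀ r : Fin m,
      |∑ j ∈ Finset.univ.filter (fun j : Fin d => k ≤ (j : ℕ)), W r j * pm (x j)| ≤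
        ((d : ℝ) ^ k)⁻¹) :
    |net k d m a W x - (m : ℝ) / 2 ^ (k + 1) * goodNet k d hkd x| ≤
      (α * (k : ℝ) ^ k * ((2 : ℝ) ^ k)⁻¹ * (1 + Real.exp (-2)) ^ k +
        0.5 * (1 + α) * (k : ℝ) * ((d : ℝ) ^ k)⁻¹ * ((k : ℝ) + ((d : ℝ) ^ k)⁻¹) ^ (k - 1) +
        0.5 * (1 + α) * (2 * ((d : ℝ) ^ k)⁻¹) ^ k) * m := by
  have hd1 : 1 ≤ d := le_trans hk hkd
  have hdR : (0 : ℝ) < d := by exact_mod_cast Nat.lt_of_lt_of_le Nat.zero_lt_one hd1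
  set ε : ℝ := ((d : ℝ) ^ k)⁻¹ with hεdef
  have hε0 : 0 ≤ ε := by positivity
  set η : ℝ := ((d : ℝ) ^ (k + 1))⁻¹ with hηdef
  set P : Fin m → Prop := fun r => goodNeuron k d m W a r with hPdef
  set S : (Fin k → Bool) → ℝ :=
    fun b => ∑ j : Fin k, pm (b j) * pm (x (Fin.castLE hkd j)) with hSdef
  set σ : (Fin k → Bool) → ℝ := fun b => ∏ j, pm (b j) with hσdef
  set δ : Fin m → ℝ :=
    fun r => ∑ j ∈ Finset.univ.filter (fun j : Fin d => k ≤ (j : ℕ)), W r j * pm (x j) with hδdef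
  set F : Fin m → ℝ := fun r => pm (a r) * ip d (W r) x ^ k with hFdef
  set Gb : (Fin k → Bool) → Finset (Fin m) :=
    fun b => Finset.univ.filter (fun r => P r ∧ hasPattern k d m hkd W b r) with hGbdef
  set Bad : Finset (Fin m) := Finset.univ.filter (fun r => ¬ P r) with hBaddef
  set C : ℝ := (m : ℝ) / 2 ^ (k + 1) with hCdef
  -- pattern extraction
  set β : Fin m → (Fin k → Bool) :=
    fun r j => if W r (Fin.castLE hkd j) = 1 then true else false with hβdef
  have hWpm : ∀ r, P r → ∀ j : Fin k,
      W r (Fin.castLE hkd j) = pm (β r j) ∧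
        Real.sign (W r (Fin.castLE hkd j)) = pm (β r j) := by
    intro r hr j
    have hj : ((Fin.castLE hkd j : Fin d) : ℕ) < k := j.2
    rcases h1 r hr _ hj with h | h
    · have hb : β r j = true := by simp [hβdef, h]
      refine ⟨by rw [hb, h]; simp [pm], ?_⟩
      rw [hb, h, Real.sign_one]; simp [pm]
    · have hb : β r j = false := by simp [hβdef, h]; norm_num
      refine ⟨by rw [hb, h]; simp [pm], ?_⟩
      rw [hb, h, Real.sign_of_neg (by norm_num : (-1 : ℝ) < 0)]; simp [pm]
  have hpat_iff : ∀ r, P r → ∀ b, hasPattern k d m hkd W b r ↔ b = β r := by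
    intro r hr b
    constructor
    · intro h; funext j
      exact aux_pm_inj _ _ ((h j).symm.trans (hWpm r hr j).2)
    · rintro rfl j; exact (hWpm r hr j).2
  -- the split of the network sum
  have hsplit : net k d m a W x
      = (∑ b : Fin k → Bool, ∑ r ∈ Gb b, F r) + ∑ r ∈ Bad, F r := by
    have h0 : net k d m a W x
        = (∑ r ∈ Finset.univ.filter P, F r) + ∑ r ∈ Bad, F r :=
      (Finset.sum_filter_add_sum_filter_not Finset.univ P F).symm
    rw [h0]
    congr 1
    calc ∑ r ∈ Finset.univ.filter P, F r
        = ∑ r : Fin m, if P r then F r else 0 := Finset.sum_filter _ _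
      _ = ∑ r : Fin m, ∑ b : Fin k → Bool,
            if P r ∧ hasPattern k d m hkd W b r then F r else 0 := by
          apply Finset.sum_congr rfl; intro r _
          by_cases hr : P r
          · rw [if_pos hr]
            have heq : ∀ b : Fin k → Bool,
                (if P r ∧ hasPattern k d m hkd W b r then F r else 0)
                  = if b = β r then F r else 0 := by
              intro b
              by_cases hb : b = β r
              · rw [if_pos ⟨hr, (hpat_iff r hr b).mpr hb⟩, if_pos hb]
              · rw [if_neg (fun h => hb ((hpat_iff r hr b).mp h.2)), if_neg hb]
            rw [Finset.sum_congr rfl fun b _ => heq b,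
              Finset.sum_ite_eq' Finset.univ (β r) (fun _ => F r)]
            simp
          · rw [if_neg hr,
              Finset.sum_congr rfl (fun b _ => if_neg (fun h => hr h.1))]
            simp
      _ = ∑ b : Fin k → Bool, ∑ r : Fin m,
            if P r ∧ hasPattern k d m hkd W b r then F r else 0 := Finset.sum_comm
      _ = ∑ b : Fin k → Bool, ∑ r ∈ Gb b, F r := by
          apply Finset.sum_congr rfl; intro b _
          exact (Finset.sum_filter _ _).symm
  -- decomposing the inner product
  have hipsplit : ∀ r : Fin m, ip d (W r) x
      = (∑ j : Fin k, W r (Fin.castLE hkd j) * pm (x (Fin.castLE hkd j))) + δ r := by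
    intro r
    have h0 : ip d (W r) x
        = (∑ j ∈ Finset.univ.filter (fun j : Fin d => (j : ℕ) < k), W r j * pm (x j))
          + ∑ j ∈ Finset.univ.filter (fun j : Fin d => ¬ (j : ℕ) < k), W r j * pm (x j) :=
      (Finset.sum_filter_add_sum_filter_not Finset.univ _ _).symm
    have hfil : Finset.univ.filter (fun j : Fin d => ¬ (j : ℕ) < k)
        = Finset.univ.filter (fun j : Fin d => k ≤ (j : ℕ)) := by
      ext j; simp [not_lt]
    rw [h0, hfil, aux_sum_cast k d hkd (fun j => W r j * pm (x j))]
  -- for good neurons with pattern b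
  have hFr : ∀ b r, P r → hasPattern k d m hkd W b r → F r = σ b * (S b + δ r) ^ k := by
    intro b r hr hp
    have hW : ∀ j : Fin k, W r (Fin.castLE hkd j) = pm (b j) := by
      intro j
      rw [(hWpm r hr j).1, ← (hpat_iff r hr b).mp hp]
    have ha : pm (a r) = σ b := by
      have h0 : pm (a r)
          = ∏ j ∈ Finset.univ.filter (fun j : Fin d => (j : ℕ) < k), Real.sign (W r j) := hr
      rw [h0, aux_prod_cast k d hkd (fun j => Real.sign (W r j))]
      exact Finset.prod_congr rfl (fun j _ => hp j)
    have hip : ip d (W r) x = S b + δ r := by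
      rw [hipsplit r]
      congr 1
      exact Finset.sum_congr rfl (fun j _ => by rw [hW j])
    rw [hFdef]
    simp only []
    rw [ha, hip]
  -- noise bound
  have hδε : ∀ r, |δ r| ≤ ε := h4
  -- |S b| ≤ k and the exp bound
  have habsS : ∀ b, |S b| ≤ k := by
    intro b
    calc |S b| ≤ ∑ j : Fin k, |pm (b j) * pm (x (Fin.castLE hkd j))| :=
          Finset.abs_sum_le_sum_abs _ _
      _ = ∑ _j : Fin k, (1 : ℝ) := by
          apply Finset.sum_congr rfl; intro j _
          rw [abs_mul, aux_abs_pm, aux_abs_pm, one_mul]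
      _ = k := by simp
  set Ebig : (Fin k → Bool) → ℝ := fun b =>
    (∏ j, (if b j = x (Fin.castLE hkd j) then (1 : ℝ) else Real.exp (-2))) +
      ∏ j, (if b j = x (Fin.castLE hkd j) then Real.exp (-2) else (1 : ℝ)) with hEdef
  have hEbig0 : ∀ b, 0 ≤ Ebig b := by
    intro b
    have e1 : (0:ℝ) ≤ ∏ j, (if b j = x (Fin.castLE hkd j) then (1 : ℝ) else Real.exp (-2)) :=
      Finset.prod_nonneg (fun j _ => by split <;> positivity)
    have e2 : (0:ℝ) ≤ ∏ j, (if b j = x (Fin.castLE hkd j) then Real.exp (-2) else (1 : ℝ)) :=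
      Finset.prod_nonneg (fun j _ => by split <;> positivity)
    simpa [hEdef] using add_nonneg e1 e2
  have hSk : ∀ b, |S b| ^ k ≤ (k : ℝ) ^ k * Ebig b := by
    intro b
    set i : ℕ := (Finset.univ.filter (fun j : Fin k => ¬ b j = x (Fin.castLE hkd j))).card with hidef
    set jc : ℕ := (Finset.univ.filter (fun j : Fin k => b j = x (Fin.castLE hkd j))).card with hjdef
    have hij : i + jc = k := by
      have := Finset.card_filter_add_card_filter_not
        (s := (Finset.univ : Finset (Fin k))) (p := fun j => b j = x (Fin.castLE hkd j))
      simp only [Finset.card_univ, Fintype.card_fin] at this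
      omega
    have hS : S b = (jc : ℝ) - i := aux_S_eq b (fun j => x (Fin.castLE hkd j))
    have hkey := aux_key i jc k (by omega) hij
    rw [hS]
    refine le_trans hkey ?_
    have hexp1 : Real.exp (-(2 * (i : ℝ)))
        = ∏ j, (if b j = x (Fin.castLE hkd j) then (1 : ℝ) else Real.exp (-2)) := by
      rw [aux_prod_ite_card (fun j => b j = x (Fin.castLE hkd j)) (Real.exp (-2)),
        ← Real.exp_nat_mul]
      congr 1
      push_cast
      ring
    have hexp2 : Real.exp (-(2 * (jc : ℝ)))
        = ∏ j, (if b j = x (Fin.castLE hkd j) then Real.exp (-2) else (1 : ℝ)) := by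
      rw [aux_prod_ite_card' (fun j => b j = x (Fin.castLE hkd j)) (Real.exp (-2)),
        ← Real.exp_nat_mul]
      congr 1
      push_cast
      ring
    rw [hEdef]
    simp only []
    rw [← hexp1, ← hexp2]
  -- cardinality bounds
  have hcard_ub : ∀ b, ((Gb b).card : ℝ) ≤ (1 + α) * m / 2 ^ (k + 1) := fun b => (h3 b).2
  have hcard_dev : ∀ b, |((Gb b).card : ℝ) - C| ≤ α * m / 2 ^ (k + 1) := by
    intro b
    rw [abs_le]
    constructor
    · have := (h3 b).1
      rw [hCdef]
      have e : (1 - α) * m / 2 ^ (k + 1) = (m : ℝ) / 2 ^ (k + 1) - α * m / 2 ^ (k + 1) := by ring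
      linarith [this, e ▸ this]
    · have := (h3 b).2
      rw [hCdef]
      have e : (1 + α) * m / 2 ^ (k + 1) = (m : ℝ) / 2 ^ (k + 1) + α * m / 2 ^ (k + 1) := by ring
      linarith [e ▸ this]
  have hσ1 : ∀ b, |σ b| = 1 := by
    intro b
    rw [hσdef]
    simp only []
    rw [Finset.abs_prod]
    simp [aux_abs_pm]
  have hcard0 : ∀ b, (0:ℝ) ≤ ((Gb b).card : ℝ) := fun b => Nat.cast_nonneg _
  -- the per-pattern bound
  have hper : ∀ b, |(∑ r ∈ Gb b, F r) - C * (σ b * S b ^ k)|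
      ≤ (1 + α) * m / 2 ^ (k + 1) * ((k : ℝ) * ε * ((k : ℝ) + ε) ^ (k - 1))
        + α * m / 2 ^ (k + 1) * ((k : ℝ) ^ k * Ebig b) := by
    intro b
    have hsum : ∑ r ∈ Gb b, F r = σ b * ∑ r ∈ Gb b, (S b + δ r) ^ k := by
      rw [Finset.mul_sum]
      apply Finset.sum_congr rfl; intro r hr
      obtain ⟨h1r, h2r⟩ := (Finset.mem_filter.mp hr).2
      exact hFr b r h1r h2r
    have key : (∑ r ∈ Gb b, F r) - C * (σ b * S b ^ k)
        = σ b * ((∑ r ∈ Gb b, ((S b + δ r) ^ k - S b ^ k))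
            + (((Gb b).card : ℝ) - C) * S b ^ k) := by
      rw [hsum]
      have hd : ∑ r ∈ Gb b, ((S b + δ r) ^ k - S b ^ k)
          = (∑ r ∈ Gb b, (S b + δ r) ^ k) - ((Gb b).card : ℝ) * S b ^ k := by
        rw [Finset.sum_sub_distrib, Finset.sum_const, nsmul_eq_mul]
      rw [hd]; ring
    rw [key, abs_mul, hσ1 b, one_mul]
    calc |(∑ r ∈ Gb b, ((S b + δ r) ^ k - S b ^ k)) + (((Gb b).card : ℝ) - C) * S b ^ k|
        ≤ |∑ r ∈ Gb b, ((S b + δ r) ^ k - S b ^ k)|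
            + |(((Gb b).card : ℝ) - C) * S b ^ k| := abs_add_le _ _
      _ ≤ (∑ r ∈ Gb b, |(S b + δ r) ^ k - S b ^ k|)
            + |((Gb b).card : ℝ) - C| * |S b| ^ k := by
          apply add_le_add (Finset.abs_sum_le_sum_abs _ _)
          rw [abs_mul, abs_pow]
      _ ≤ (∑ _r ∈ Gb b, (k : ℝ) * ((k : ℝ) + ε) ^ (k - 1) * ε)
            + (α * m / 2 ^ (k + 1)) * ((k : ℝ) ^ k * Ebig b) := by
          apply add_le_add
          · apply Finset.sum_le_sum; intro r _
            have hb1 : |S b + δ r| ≤ (k : ℝ) + ε :=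
              le_trans (abs_add_le _ _) (add_le_add (habsS b) (hδε r))
            have hb2 : |S b| ≤ (k : ℝ) + ε := le_trans (habsS b) (by linarith)
            have h := aux_abs_pow_sub_pow (S b + δ r) (S b) ((k : ℝ) + ε) k hb1 hb2
            have he : S b + δ r - S b = δ r := by ring
            rw [he] at h
            refine le_trans h ?_
            have hnn : (0:ℝ) ≤ (k : ℝ) * ((k : ℝ) + ε) ^ (k - 1) := by positivity
            exact mul_le_mul_of_nonneg_left (hδε r) hnn
          · refine mul_le_mul (hcard_dev b) (hSk b) (by positivity) (by positivity)
      _ ≤ (1 + α) * m / 2 ^ (k + 1) * ((k : ℝ) * ε * ((k : ℝ) + ε) ^ (k - 1))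
            + α * m / 2 ^ (k + 1) * ((k : ℝ) ^ k * Ebig b) := by
          apply add_le_add_left
          rw [Finset.sum_const, nsmul_eq_mul]
          have hnn : (0:ℝ) ≤ (k : ℝ) * ((k : ℝ) + ε) ^ (k - 1) * ε := by positivity
          calc ((Gb b).card : ℝ) * ((k : ℝ) * ((k : ℝ) + ε) ^ (k - 1) * ε)
              ≤ (1 + α) * m / 2 ^ (k + 1) * ((k : ℝ) * ((k : ℝ) + ε) ^ (k - 1) * ε) :=
                mul_le_mul_of_nonneg_right (hcard_ub b) hnn
            _ = (1 + α) * m / 2 ^ (k + 1) * ((k : ℝ) * ε * ((k : ℝ) + ε) ^ (k - 1)) := by ring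
  -- bad neuron bound
  have hbad : ∀ r, r ∈ Bad → |F r| ≤ (2 * ε) ^ k := by
    intro r hr
    have hrP : ¬ P r := (Finset.mem_filter.mp hr).2
    have hip : |ip d (W r) x| ≤ 2 * ε := by
      rw [hipsplit r]
      have hA : |∑ j : Fin k, W r (Fin.castLE hkd j) * pm (x (Fin.castLE hkd j))| ≤ ε := by
        rw [← aux_sum_cast k d hkd (fun j => W r j * pm (x j))]
        calc |∑ j ∈ Finset.univ.filter (fun j : Fin d => (j : ℕ) < k), W r j * pm (x j)|
            ≤ ∑ j ∈ Finset.univ.filter (fun j : Fin d => (j : ℕ) < k), |W r j * pm (x j)| :=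
              Finset.abs_sum_le_sum_abs _ _
          _ ≤ ∑ _j ∈ Finset.univ.filter (fun j : Fin d => (j : ℕ) < k), η := by
              apply Finset.sum_le_sum; intro j _
              rw [abs_mul, aux_abs_pm, mul_one]
              exact h2b r hrP j
          _ = ((Finset.univ.filter (fun j : Fin d => (j : ℕ) < k)).card : ℝ) * η := by
              rw [Finset.sum_const, nsmul_eq_mul]
          _ ≤ (d : ℝ) * η := by
              have hc : ((Finset.univ.filter (fun j : Fin d => (j : ℕ) < k)).card : ℝ) ≤ d := by
                have := Finset.card_filter_le (Finset.univ : Finset (Fin d))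
                  (fun j : Fin d => (j : ℕ) < k)
                have h2 : (Finset.univ : Finset (Fin d)).card = d := by simp
                exact_mod_cast h2 ▸ this
              have hη0 : (0:ℝ) ≤ η := by positivity
              exact mul_le_mul_of_nonneg_right hc hη0
          _ = ε := by
              rw [hηdef, hεdef]
              rw [pow_succ]
              field_simp
      calc |(∑ j : Fin k, W r (Fin.castLE hkd j) * pm (x (Fin.castLE hkd j))) + δ r|
          ≤ |∑ j : Fin k, W r (Fin.castLE hkd j) * pm (x (Fin.castLE hkd j))| + |δ r| :=
            abs_add_le _ _
        _ ≤ ε + ε := add_le_add hA (hδε r)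
        _ = 2 * ε := by ring
    rw [hFdef]
    simp only []
    rw [abs_mul, aux_abs_pm, one_mul, abs_pow]
    exact pow_le_pow_left₀ (abs_nonneg _) hip k
  have hbadsum : |∑ r ∈ Bad, F r| ≤ (1 + α) * m / 2 * (2 * ε) ^ k := by
    calc |∑ r ∈ Bad, F r| ≤ ∑ r ∈ Bad, |F r| := Finset.abs_sum_le_sum_abs _ _
      _ ≤ ∑ _r ∈ Bad, (2 * ε) ^ k := Finset.sum_le_sum hbad
      _ = (Bad.card : ℝ) * (2 * ε) ^ k := by rw [Finset.sum_const, nsmul_eq_mul]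
      _ ≤ (1 + α) * m / 2 * (2 * ε) ^ k := by
          apply mul_le_mul_of_nonneg_right h3b (by positivity)
  -- sum of Ebig
  have hEsum : ∑ b : Fin k → Bool, Ebig b = 2 * (1 + Real.exp (-2)) ^ k :=
    aux_sum_E k (fun j => x (Fin.castLE hkd j)) (Real.exp (-2))
  -- assemble
  have hgood : (m : ℝ) / 2 ^ (k + 1) * goodNet k d hkd x
      = ∑ b : Fin k → Bool, C * (σ b * S b ^ k) := by
    rw [goodNet, Finset.mul_sum]
  have hcardb : (Finset.univ : Finset (Fin k → Bool)).card = 2 ^ k := by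
    simp [Finset.card_univ]
  calc |net k d m a W x - (m : ℝ) / 2 ^ (k + 1) * goodNet k d hkd x|
      = |(∑ b : Fin k → Bool, ((∑ r ∈ Gb b, F r) - C * (σ b * S b ^ k)))
          + ∑ r ∈ Bad, F r| := by
        rw [hsplit, hgood, add_sub_right_comm, ← Finset.sum_sub_distrib]
    _ ≤ (∑ b : Fin k → Bool, |(∑ r ∈ Gb b, F r) - C * (σ b * S b ^ k)|)
          + |∑ r ∈ Bad, F r| :=
        le_trans (abs_add_le _ _) (add_le_add_left (Finset.abs_sum_le_sum_abs _ _) _)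
    _ ≤ (∑ b : Fin k → Bool,
          ((1 + α) * m / 2 ^ (k + 1) * ((k : ℝ) * ε * ((k : ℝ) + ε) ^ (k - 1))
            + α * m / 2 ^ (k + 1) * ((k : ℝ) ^ k * Ebig b)))
          + (1 + α) * m / 2 * (2 * ε) ^ k :=
        add_le_add (Finset.sum_le_sum (fun b _ => hper b)) hbadsum
    _ = (2 : ℝ) ^ k * ((1 + α) * m / 2 ^ (k + 1) * ((k : ℝ) * ε * ((k : ℝ) + ε) ^ (k - 1)))
          + α * m / 2 ^ (k + 1) * ((k : ℝ) ^ k * (2 * (1 + Real.exp (-2)) ^ k))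
          + (1 + α) * m / 2 * (2 * ε) ^ k := by
        rw [Finset.sum_add_distrib, Finset.sum_const, hcardb, ← Finset.mul_sum,
          ← Finset.mul_sum, hEsum, nsmul_eq_mul]
        push_cast
        ring
    _ ≤ (α * (k : ℝ) ^ k * ((2 : ℝ) ^ k)⁻¹ * (1 + Real.exp (-2)) ^ k +
          0.5 * (1 + α) * (k : ℝ) * ε * ((k : ℝ) + ε) ^ (k - 1) +
          0.5 * (1 + α) * (2 * ε) ^ k) * m := by
        apply le_of_eq
        have h2k : (2 : ℝ) ^ (k + 1) = 2 * 2 ^ k := by rw [pow_succ]; ring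
        rw [h2k]
        have h2kpos : (0:ℝ) < (2:ℝ) ^ k := by positivity
        field_simp
        ring
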